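/- For every endomorphism φ of a finitely generated free group F, there exists a finitely generated free group F₁ and an injective endomorphism ψ : F₁ → F₁ such that the mapping torus M(φ) is isomorphic to M(ψ). -/

import Mathlib

open Monoid

/-- The mapping torus `M(φ) = ⟨G, t | t⁻¹ g t = φ(g)⟩` of an endomorphism `φ : G → G`. -/
def mappingTorus {G : Type*} [Group G] (φ : G →* G) : Type _ :=
  Coprod G (Multiplicative ℤ) ⧸ Subgroup.normalClosure
    {x | ∃ g : G, x = (Coprod.inr (Multiplicative.ofAdd (1 : ℤ)))⁻¹ * Coprod.inl g *
      Coprod.inr (Multiplicative.ofAdd (1 : ℤ)) * (Coprod.inl (φ g))⁻¹}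

instance {G : Type*} [Group G] (φ : G →* G) : Group (mappingTorus φ) := by
  unfold mappingTorus; infer_instance

/-- The canonical homomorphism `G → M(φ)`. -/
def mappingTorus.ofBase {G : Type*} [Group G] (φ : G →* G) : G →* mappingTorus φ :=
  (QuotientGroup.mk' _).comp Coprod.inl

/-- The stable letter `t ∈ M(φ)`. -/
def mappingTorus.t {G : Type*} [Group G] (φ : G →* G) : mappingTorus φ :=
  QuotientGroup.mk' _ (Coprod.inr (Multiplicative.ofAdd (1 : ℤ)))

namespace mappingTorus

variable {G : Type*} [Group G] (φ : G →* G)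

theorem conj_ofBase (g : G) : (t φ)⁻¹ * ofBase φ g * t φ = ofBase φ (φ g) := by
  have h : (QuotientGroup.mk' _ : Coprod G (Multiplicative ℤ) →* mappingTorus φ)
      ((Coprod.inr (Multiplicative.ofAdd (1 : ℤ)))⁻¹ * Coprod.inl g *
        Coprod.inr (Multiplicative.ofAdd (1 : ℤ)) * (Coprod.inl (φ g))⁻¹) = 1 := by
    rw [QuotientGroup.mk'_apply, QuotientGroup.eq_one_iff]
    exact Subgroup.subset_normalClosure ⟨g, rfl⟩
  have h2 := h
  simp only [map_mul, map_inv] at h2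
  have h3 : (t φ)⁻¹ * ofBase φ g * t φ * (ofBase φ (φ g))⁻¹ = 1 := h2
  rw [mul_inv_eq_one] at h3
  exact h3

variable {H : Type*} [Group H] (f : G →* H) (τ : H) (hτ : ∀ g, τ⁻¹ * f g * τ = f (φ g))

/-- Universal property map out of the mapping torus. -/
def lift : mappingTorus φ →* H :=
  QuotientGroup.lift _ (Coprod.lift f (zpowersHom H τ)) (by
    intro x hx
    refine Subgroup.normalClosure_le_normal ?_ hx
    · rintro y ⟨g, rfl⟩
      have : (Coprod.lift f (zpowersHom H τ))
          ((Coprod.inr (Multiplicative.ofAdd (1 : ℤ)))⁻¹ * Coprod.inl g *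
            Coprod.inr (Multiplicative.ofAdd (1 : ℤ)) * (Coprod.inl (φ g))⁻¹) = 1 := by
        simp only [map_mul, map_inv, Coprod.lift_apply_inl, Coprod.lift_apply_inr]
        have hz : (zpowersHom H τ) (Multiplicative.ofAdd (1 : ℤ)) = τ := by
          simp [zpowersHom]
        rw [hz, ← hτ g]
        group
      simpa [MonoidHom.mem_ker] using this)

@[simp] theorem lift_ofBase (g : G) : lift φ f τ hτ (ofBase φ g) = f g := by
  show (QuotientGroup.lift _ _ _) (QuotientGroup.mk' _ (Coprod.inl g)) = f g
  rw [QuotientGroup.mk'_apply, QuotientGroup.lift_mk', Coprod.lift_apply_inl]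

@[simp] theorem lift_t : lift φ f τ hτ (t φ) = τ := by
  show (QuotientGroup.lift _ _ _) (QuotientGroup.mk' _ (Coprod.inr (Multiplicative.ofAdd (1:ℤ)))) = τ
  rw [QuotientGroup.mk'_apply, QuotientGroup.lift_mk', Coprod.lift_apply_inr]
  simp [zpowersHom]

theorem hom_ext {F₁ F₂ : mappingTorus φ →* H}
    (h1 : F₁.comp (ofBase φ) = F₂.comp (ofBase φ)) (h2 : F₁ (t φ) = F₂ (t φ)) : F₁ = F₂ := by
  apply QuotientGroup.monoidHom_ext
  apply Coprod.hom_ext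
  · ext g
    exact DFunLike.congr_fun h1 g
  · apply MonoidHom.ext_mint
    exact h2

end mappingTorus

namespace mappingTorus

variable {G G₁ : Type*} [Group G] [Group G₁]

/-- Transport of the mapping torus along a group isomorphism. -/
noncomputable def congrEquiv (φ : G →* G) (e : G ≃* G₁) :
    mappingTorus φ ≃* mappingTorus ((e.toMonoidHom.comp φ).comp e.symm.toMonoidHom) := by
  set ψ := (e.toMonoidHom.comp φ).comp e.symm.toMonoidHom with hψ
  have h1 : ∀ g : G, (t ψ)⁻¹ * ((ofBase ψ).comp e.toMonoidHom) g * t ψ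
      = ((ofBase ψ).comp e.toMonoidHom) (φ g) := by
    intro g
    show (t ψ)⁻¹ * ofBase ψ (e g) * t ψ = ofBase ψ (e (φ g))
    rw [conj_ofBase]
    congr 1
    simp [hψ]
  have h2 : ∀ g : G₁, (t φ)⁻¹ * ((ofBase φ).comp e.symm.toMonoidHom) g * t φ
      = ((ofBase φ).comp e.symm.toMonoidHom) (ψ g) := by
    intro g
    show (t φ)⁻¹ * ofBase φ (e.symm g) * t φ = ofBase φ (e.symm (ψ g))
    rw [conj_ofBase]
    congr 1
    simp [hψ]
  refine MulEquivClass.toMulEquiv (MonoidHom.toMulEquiv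
    (lift φ ((ofBase ψ).comp e.toMonoidHom) (t ψ) h1)
    (lift ψ ((ofBase φ).comp e.symm.toMonoidHom) (t φ) h2) ?_ ?_)
  · apply hom_ext
    · ext g
      simp
    · simp
  · apply hom_ext
    · ext g
      simp
    · simp

/-- The mapping torus of `φ` is isomorphic to the mapping torus of the restriction of `φ`
to its range. -/
noncomputable def rangeEquiv (φ : G →* G) :
    mappingTorus φ ≃*
      mappingTorus ((φ.comp φ.range.subtype).codRestrict φ.range
        (fun h => ⟨h, rfl⟩)) := by
  set H := φ.range
  set φ' : H →* H := (φ.comp H.subtype).codRestrict H (fun h => ⟨h, rfl⟩) with hφ'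
  have hφ'c : ∀ h : H, ((φ' h : H) : G) = φ (h : G) := fun h => rfl
  set c : G →* mappingTorus φ' := (ofBase φ').comp φ.rangeRestrict with hc
  set β : G →* mappingTorus φ' :=
    ((MulAut.conj (t φ')).toMonoidHom.comp c) with hβ
  have hβ_apply : ∀ g : G, β g = t φ' * c g * (t φ')⁻¹ := fun g => rfl
  have hcφ : ∀ g : G, (t φ')⁻¹ * c g * t φ' = c (φ g) := by
    intro g
    have h0 := conj_ofBase φ' (φ.rangeRestrict g)
    show (t φ')⁻¹ * ofBase φ' (φ.rangeRestrict g) * t φ' = ofBase φ' (φ.rangeRestrict (φ g))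
    rw [h0]
    rfl
  have hτA : ∀ g : G, (t φ')⁻¹ * β g * t φ' = β (φ g) := by
    intro g
    rw [hβ_apply, hβ_apply, ← hcφ g]
    group
  have hτB : ∀ h : H, (t φ)⁻¹ * ((ofBase φ).comp H.subtype) h * t φ
      = ((ofBase φ).comp H.subtype) (φ' h) := by
    intro h
    show (t φ)⁻¹ * ofBase φ (h : G) * t φ = ofBase φ ((φ' h : H) : G)
    rw [conj_ofBase, hφ'c]
  refine MulEquivClass.toMulEquiv (MonoidHom.toMulEquiv
    (lift φ β (t φ') hτA) (lift φ' ((ofBase φ).comp H.subtype) (t φ) hτB) ?_ ?_)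
  · -- B ∘ A = id on mappingTorus φ
    apply hom_ext
    · ext g
      simp only [MonoidHom.comp_apply, MonoidHom.id_apply, MonoidHom.coe_comp,
        Function.comp_apply, lift_ofBase]
      rw [hβ_apply]
      simp only [map_mul, map_inv, lift_t]
      have h3 : (lift φ' ((ofBase φ).comp H.subtype) (t φ) hτB) (c g) = ofBase φ (φ g) := by
        show (lift φ' ((ofBase φ).comp H.subtype) (t φ) hτB) (ofBase φ' (φ.rangeRestrict g))
          = ofBase φ (φ g)
        rw [lift_ofBase]
        rfl
      rw [h3, ← conj_ofBase φ g]
      group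
    · simp
  · -- A ∘ B = id on mappingTorus φ'
    apply hom_ext
    · ext h
      simp only [MonoidHom.comp_apply, MonoidHom.id_apply, MonoidHom.coe_comp,
        Function.comp_apply, lift_ofBase]
      rw [hβ_apply]
      have h4 : c (H.subtype h) = ofBase φ' (φ' h) := by
        show ofBase φ' (φ.rangeRestrict (H.subtype h)) = ofBase φ' (φ' h)
        rfl
      rw [h4, ← conj_ofBase φ' h]
      group
    · simp

end mappingTorus

namespace MTAux

open FreeGroup

/-- Extend an injective-on-`s` self map of a fintype to a permutation. -/
lemma exists_perm_extend {α : Type*} [Fintype α] (f : α → α) (s : Set α)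
    (hs : Set.InjOn f s) : ∃ σ : Equiv.Perm α, ∀ x ∈ s, σ x = f x := by
  classical
  let e : {x // x ∈ s} ≃ {x // x ∈ f '' s} := Equiv.Set.imageOfInjOn f s hs
  refine ⟨e.extendSubtype, fun x hx => ?_⟩
  rw [Equiv.extendSubtype_apply_of_mem e x hx]
  rfl

variable {α : Type*} [DecidableEq α]

lemma red_no_cancel {L : List (α × Bool)} (hL : FreeGroup.reduce L = L)
    {i : ℕ} {a : α} {b : Bool} (h1 : L[i]? = some (a, b)) (h2 : L[i + 1]? = some (a, !b)) :
    False := by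
  obtain ⟨hi1, hg1⟩ := List.getElem?_eq_some_iff.mp h1
  obtain ⟨hi2, hg2⟩ := List.getElem?_eq_some_iff.mp h2
  have hdec : L = L.take i ++ (a, b) :: (a, !b) :: L.drop (i + 2) := by
    conv_lhs => rw [← List.take_append_drop i L]
    congr 1
    rw [List.drop_eq_getElem_cons hi1, hg1]
    congr 1
    rw [List.drop_eq_getElem_cons hi2, hg2]
  exact FreeGroup.reduce.not (hL.trans hdec)

lemma exists_sigma (L : List (α × Bool)) (hL : FreeGroup.reduce L = L) (a : α) :
    ∃ σ : Equiv.Perm (Fin (L.length + 1)),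
      (∀ i : ℕ, ∀ h : i < L.length, L[i] = (a, true) →
        σ ⟨i + 1, by omega⟩ = ⟨i, by omega⟩) ∧
      (∀ i : ℕ, ∀ _h : i < L.length, L[i] = (a, false) →
        σ ⟨i, by omega⟩ = ⟨i + 1, by omega⟩) := by
  classical
  set n := L.length with hn
  set B1 : Fin (n + 1) → Prop := fun x => 1 ≤ x.val ∧ L[x.val - 1]? = some (a, true) with hB1
  set B2 : Fin (n + 1) → Prop := fun x => L[x.val]? = some (a, false) with hB2
  have hB2lt : ∀ x : Fin (n + 1), B2 x → x.val < n := fun x hx =>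
    (List.getElem?_eq_some_iff.mp hx).1
  set f : Fin (n + 1) → Fin (n + 1) := fun x =>
    if B1 x then ⟨x.val - 1, by omega⟩
    else if h2 : B2 x then ⟨x.val + 1, by have := hB2lt x h2; omega⟩
    else x with hf
  set s : Set (Fin (n + 1)) := {x | B1 x ∨ B2 x} with hs
  have fx : ∀ z : Fin (n+1), B1 z → f z = ⟨z.val - 1, by omega⟩ := by
    intro z hz; simp only [hf]; rw [if_pos hz]
  have fx2 : ∀ z : Fin (n+1), ¬ B1 z → ∀ h2 : B2 z, f z = ⟨z.val + 1, by
      have := hB2lt z h2; omega⟩ := by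
    intro z hz h2; simp only [hf]; rw [if_neg hz, dif_pos h2]
  have hinj : Set.InjOn f s := by
    have main : ∀ u v : Fin (n+1), u ∈ s → v ∈ s → f u = f v → u.val ≤ v.val → u = v := by
      intro u v hu hv huv hle
      by_cases b1u : B1 u <;> by_cases b1v : B1 v
      · rw [fx u b1u, fx v b1v] at huv
        simp only [Fin.mk.injEq] at huv
        have h1 := b1u.1; have h2 := b1v.1
        exact Fin.ext (by omega)
      · have b2v : B2 v := hv.resolve_left b1v
        rw [fx u b1u, fx2 v b1v b2v] at huv
        simp only [Fin.mk.injEq] at huv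
        have := b1u.1
        omega
      · have b2u : B2 u := hu.resolve_left b1u
        rw [fx2 u b1u b2u, fx v b1v] at huv
        simp only [Fin.mk.injEq] at huv
        have hv1 := b1v.1
        exfalso
        refine red_no_cancel hL (b := false) b2u ?_
        have hvv : u.val + 1 = v.val - 1 := huv
        rw [show u.val + 1 = v.val - 1 from hvv]
        exact b1v.2
      · have b2u : B2 u := hu.resolve_left b1u
        have b2v : B2 v := hv.resolve_left b1v
        rw [fx2 u b1u b2u, fx2 v b1v b2v] at huv
        simp only [Fin.mk.injEq] at huv
        exact Fin.ext (by omega)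
    intro x hx y hy hxy
    rcases le_total x.val y.val with hle | hle
    · exact main x y hx hy hxy hle
    · exact (main y x hy hx hxy.symm hle).symm
  obtain ⟨σ, hσ⟩ := exists_perm_extend f s hinj
  refine ⟨σ, ?_, ?_⟩
  · intro i hi hget
    have b1 : B1 ⟨i + 1, by omega⟩ := by
      refine ⟨by exact Nat.succ_le_succ (Nat.zero_le i), ?_⟩
      show L[i + 1 - 1]? = some (a, true)
      simp only [Nat.add_sub_cancel]
      rw [List.getElem?_eq_some_iff]
      exact ⟨hi, hget⟩
    rw [hσ _ (Or.inl b1), fx _ b1]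
    rfl
  · intro i hi hget
    have b2 : B2 ⟨i, by omega⟩ := by
      show L[i]? = some (a, false)
      rw [List.getElem?_eq_some_iff]
      exact ⟨hi, hget⟩
    have nb1 : ¬ B1 ⟨i, by omega⟩ := by
      rintro ⟨hge, hsome⟩
      have hge' : 1 ≤ i := hge
      refine red_no_cancel hL (b := true) (i := i - 1) hsome ?_
      have heq : i - 1 + 1 = i := by omega
      rw [heq, List.getElem?_eq_some_iff]
      exact ⟨hi, hget⟩
    rw [hσ _ (Or.inr b2), fx2 _ nb1 b2]

lemma perm_prod {N : ℕ} (M : List (Equiv.Perm (Fin N))) : ∀ (k : ℕ) (hk : k + M.length < N)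
    (h : ∀ i, ∀ hi : i < M.length, M[i] ⟨k + i + 1, by omega⟩ = ⟨k + i, by omega⟩),
    M.prod ⟨k + M.length, hk⟩ = ⟨k, by omega⟩ := by
  induction M with
  | nil => intro k hk h; simp
  | cons p M ih =>
    intro k hk h
    rw [List.prod_cons, Equiv.Perm.mul_apply]
    have hlen : (p :: M).length = M.length + 1 := rfl
    have hk' : (k + 1) + M.length < N := by rw [hlen] at hk; omega
    have hidx : (⟨k + (p :: M).length, hk⟩ : Fin N) = ⟨(k + 1) + M.length, hk'⟩ := by
      simp only [Fin.mk.injEq, List.length_cons]; omega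
    rw [hidx, ih (k + 1) hk' (fun i hi => by
      have h2 := h (i + 1) (by rw [hlen]; omega)
      have e1 : (⟨k + 1 + i + 1, by omega⟩ : Fin N) = ⟨k + (i+1) + 1, by omega⟩ := by
        simp only [Fin.mk.injEq, Fin.val_mk]; try omega
      have e2 : (⟨k + 1 + i, by omega⟩ : Fin N) = ⟨k + (i+1), by omega⟩ := by
        simp only [Fin.mk.injEq, Fin.val_mk]; try omega
      rw [e1, e2]
      simpa using h2)]
    have h0 := h 0 (by rw [hlen]; omega)
    have e3 : (⟨k + 1, by omega⟩ : Fin N) = ⟨k + 0 + 1, by omega⟩ := by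
      simp only [Fin.mk.injEq, Fin.val_mk]; try omega
    have e4 : (⟨k, by omega⟩ : Fin N) = ⟨k + 0, by omega⟩ := by
      simp only [Fin.mk.injEq, Fin.val_mk]; try omega
    rw [e3, e4]
    simpa using h0

/-- Residual finiteness of free groups, permutation form. -/
lemma exists_perm_hom (w : FreeGroup α) (hw : w ≠ 1) :
    ∃ (N : ℕ) (q : FreeGroup α →* Equiv.Perm (Fin N)), q w ≠ 1 := by
  classical
  set L := w.toWord with hLdef
  have hL : FreeGroup.reduce L = L := FreeGroup.reduce_toWord w
  set n := L.length with hn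
  have hn0 : n ≠ 0 := by
    simp only [hn, hLdef]
    intro hc
    exact hw (FreeGroup.toWord_eq_nil_iff.mp (List.length_eq_zero_iff.mp hc))
  choose σ hσ1 hσ2 using fun a => exists_sigma L hL a
  refine ⟨n + 1, FreeGroup.lift (fun a => σ a), fun hq => ?_⟩
  have heval : FreeGroup.lift (fun a => σ a) w
      = List.prod (L.map fun x => cond x.2 (σ x.1) (σ x.1)⁻¹) := by
    conv_lhs => rw [← FreeGroup.mk_toWord (x := w)]
    exact FreeGroup.lift_mk
  set Mlist := L.map fun x => cond x.2 (σ x.1) (σ x.1)⁻¹ with hM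
  have hlen : Mlist.length = n := by simp [hM, hn]
  have hprop : ∀ i, ∀ hi : i < Mlist.length,
      Mlist[i] ⟨0 + i + 1, by rw [hlen] at hi; omega⟩ = ⟨0 + i, by rw [hlen] at hi; omega⟩ := by
    intro i hi
    have hi' : i < L.length := by rw [hM] at hi; simpa using hi
    have hMi : Mlist[i] = cond (L[i]'hi').2 (σ (L[i]'hi').1) (σ (L[i]'hi').1)⁻¹ := by
      simp [hM]
    rcases hLi : L[i]'hi' with ⟨a, b⟩
    rw [hMi, hLi]
    have e1 : (⟨0 + i + 1, by rw [hlen] at hi; omega⟩ : Fin (n+1)) = ⟨i + 1, by omega⟩ := by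
      simp only [Fin.mk.injEq, Fin.val_mk]; try omega
    have e2 : (⟨0 + i, by rw [hlen] at hi; omega⟩ : Fin (n+1)) = ⟨i, by omega⟩ := by
      simp only [Fin.mk.injEq, Fin.val_mk]; try omega
    rw [e1, e2]
    cases b with
    | true =>
      exact hσ1 a i hi' hLi
    | false =>
      have h2 := hσ2 a i hi' hLi
      show (σ a)⁻¹ _ = _
      rw [← h2]
      simp
  have hkey := perm_prod Mlist 0 (by rw [hlen]; omega) hprop
  rw [heval] at hq
  rw [hq] at hkey
  simp only [Equiv.Perm.one_apply, Fin.mk.injEq] at hkey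
  rw [hlen] at hkey
  omega

end MTAux

namespace MTAux

/-- Iterated composition of an endomorphism. -/
def iterHom {M : Type*} [Monoid M] (f : M →* M) : ℕ → (M →* M)
  | 0 => MonoidHom.id M
  | k + 1 => (iterHom f k).comp f

lemma iterHom_succ_apply {M : Type*} [Monoid M] (f : M →* M) (k : ℕ) (x : M) :
    iterHom f (k + 1) x = iterHom f k (f x) := rfl

lemma iterHom_add {M : Type*} [Monoid M] (f : M →* M) (a b : ℕ) :
    iterHom f (a + b) = (iterHom f a).comp (iterHom f b) := by
  induction b with
  | zero => rfl
  | succ b ih =>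
    show iterHom f ((a + b) + 1) = _
    show (iterHom f (a + b)).comp f = _
    rw [ih]
    rfl

lemma iterHom_surjective {M : Type*} [Monoid M] {f : M →* M} (hf : Function.Surjective f)
    (k : ℕ) : Function.Surjective (iterHom f k) := by
  induction k with
  | zero => exact Function.surjective_id
  | succ k ih => exact ih.comp hf

instance finite_freeGroup_homs (r : ℕ) (Q : Type*) [Group Q] [Finite Q] :
    Finite (FreeGroup (Fin r) →* Q) :=
  Finite.of_equiv _ (FreeGroup.lift : (Fin r → Q) ≃ (FreeGroup (Fin r) →* Q))

/-- Finitely generated free groups are Hopfian. -/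
lemma hopf {r : ℕ} {f : FreeGroup (Fin r) →* FreeGroup (Fin r)}
    (hf : Function.Surjective f) : Function.Injective f := by
  rw [injective_iff_map_eq_one f]
  intro g hg
  by_contra hg1
  obtain ⟨N, q, hq⟩ := exists_perm_hom g hg1
  obtain ⟨i, j, hij, hqq⟩ :=
    Finite.exists_ne_map_eq_of_infinite (fun k : ℕ => q.comp (iterHom f k))
  -- wlog i < j
  wlog hlt : i < j generalizing i j
  · exact this j i hij.symm hqq.symm (by omega)
  have hcomp : ∀ x, q x = q (iterHom f (j - i) x) := by
    intro x
    obtain ⟨y, rfl⟩ := iterHom_surjective hf i x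
    have h1 : (q.comp (iterHom f i)) y = (q.comp (iterHom f j)) y := by rw [hqq]
    have h2 : iterHom f j y = iterHom f (j - i) (iterHom f i y) := by
      rw [← MonoidHom.comp_apply, ← iterHom_add]
      congr 2
      omega
    simpa [h2] using h1
  have hfd : iterHom f (j - i) g = 1 := by
    obtain ⟨e, he⟩ : ∃ e, j - i = e + 1 := ⟨j - i - 1, by omega⟩
    rw [he, iterHom_succ_apply, hg, map_one]
  have := hcomp g
  rw [hfd, map_one] at this
  exact hq this

/-- Rank bound: a free group quotient of `F_a` has rank at most `a`. -/
lemma rank_le {a b : ℕ} {G : Type*} [Group G] (f : FreeGroup (Fin a) →* G)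
    (hf : Function.Surjective f) (e : G ≃* FreeGroup (Fin b)) : b ≤ a := by
  classical
  set Q := Multiplicative (ZMod 2)
  set s : FreeGroup (Fin a) →* FreeGroup (Fin b) := e.toMonoidHom.comp f with hsdef
  have hs : Function.Surjective s := e.surjective.comp hf
  have hinj : Function.Injective
      (fun g : Fin b → Q => FreeGroup.lift.symm ((FreeGroup.lift g).comp s)) := by
    intro g1 g2 h12
    have h13 : (FreeGroup.lift g1).comp s = (FreeGroup.lift g2).comp s := by
      have := congrArg FreeGroup.lift h12
      simpa using this
    have h14 : (FreeGroup.lift g1 : FreeGroup (Fin b) →* Q) = FreeGroup.lift g2 := by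
      apply MonoidHom.ext
      intro x
      obtain ⟨y, rfl⟩ := hs x
      exact DFunLike.congr_fun h13 y
    have := congrArg FreeGroup.lift.symm h14
    simpa using this
  have hcard := Fintype.card_le_of_injective _ hinj
  simp only [Fintype.card_fun, Fintype.card_fin] at hcard
  have hQ : Fintype.card Q = 2 := by
    simp [Q, Fintype.card_multiplicative, ZMod.card]
  rw [hQ] at hcard
  exact (Nat.pow_le_pow_iff_right (by norm_num)).mp hcard

/-- A finitely generated free group is isomorphic to some `FreeGroup (Fin n)`. -/
lemma exists_equiv_freeGroup_fin (H : Type*) [Group H] [IsFreeGroup H] [Group.FG H] :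
    ∃ n : ℕ, Nonempty (H ≃* FreeGroup (Fin n)) := by
  classical
  set Q := Multiplicative (ZMod 2)
  obtain ⟨S, hS⟩ := (‹Group.FG H› : Group.FG H).out
  -- homs from H to Q form a finite type
  have hfin : Finite (H →* Q) := by
    have hres : Function.Injective (fun f : H →* Q => (fun x : S => f x)) := by
      intro f1 f2 h12
      refine MonoidHom.eq_of_eqOn_dense hS ?_
      intro x hx
      exact congrFun h12 ⟨x, hx⟩
    exact Finite.of_injective _ hres
  -- hence the generator type is finite
  have hXfin : Finite (IsFreeGroup.Generators H) := by
    have h1 : Finite (IsFreeGroup.Generators H → Q) :=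
      Finite.of_equiv _ (IsFreeGroup.lift (H := Q)).symm
    by_contra hinf
    rw [not_finite_iff_infinite] at hinf
    have hemb : Function.Injective (fun x : IsFreeGroup.Generators H =>
        (fun y => if y = x then (Multiplicative.ofAdd (1 : ZMod 2)) else 1 :
          IsFreeGroup.Generators H → Q)) := by
      intro x1 x2 h12
      have := congrFun h12 x1
      simp only [if_pos rfl] at this
      by_contra hne
      rw [if_neg hne] at this
      exact (by decide : (1 : ZMod 2) ≠ 0) (congrArg Multiplicative.toAdd this)
    exact (Finite.of_injective _ hemb).not_infinite hinf
  have : Fintype (IsFreeGroup.Generators H) := Fintype.ofFinite _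
  refine ⟨Fintype.card (IsFreeGroup.Generators H),
    ⟨(IsFreeGroup.toFreeGroup H).trans (FreeGroup.freeGroupCongr (Fintype.equivFin _))⟩⟩

instance freeGroup_fin_fg (m : ℕ) : Group.FG (FreeGroup (Fin m)) := by
  rw [Group.fg_iff]
  exact ⟨Set.range FreeGroup.of, FreeGroup.closure_range_of _, Set.finite_range _⟩

end MTAux

theorem mappingTorus_iso_injective_case (m : ℕ)
    (φ : FreeGroup (Fin m) →* FreeGroup (Fin m)) :
    ∃ (n : ℕ) (ψ : FreeGroup (Fin n) →* FreeGroup (Fin n)),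
      Function.Injective ψ ∧ Nonempty (mappingTorus φ ≃* mappingTorus ψ) := by
  induction m using Nat.strong_induction_on with
  | _ m IH =>
  by_cases hinj : Function.Injective φ
  · exact ⟨m, φ, hinj, ⟨MulEquiv.refl _⟩⟩
  · set H := φ.range with hH
    haveI : Group.FG ↥H := Group.fg_range φ
    obtain ⟨r, ⟨e⟩⟩ := MTAux.exists_equiv_freeGroup_fin ↥H
    have hsurj : Function.Surjective φ.rangeRestrict := φ.rangeRestrict_surjective
    have hrle : r ≤ m := MTAux.rank_le φ.rangeRestrict hsurj e
    have hrlt : r < m := by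
      rcases lt_or_eq_of_le hrle with h | h
      · exact h
      · exfalso
        subst h
        have hs : Function.Surjective (e.toMonoidHom.comp φ.rangeRestrict) :=
          e.surjective.comp hsurj
        have hi : Function.Injective (e.toMonoidHom.comp φ.rangeRestrict) := MTAux.hopf hs
        have hrr : Function.Injective φ.rangeRestrict := fun x y hxy => hi (by
          simp only [MonoidHom.comp_apply, hxy])
        refine hinj (fun x y hxy => hrr ?_)
        ext
        simpa using hxy
    set φ' : ↥H →* ↥H := (φ.comp H.subtype).codRestrict H (fun h => ⟨h, rfl⟩) with hφ'
    set ψ1 := (e.toMonoidHom.comp φ').comp e.symm.toMonoidHom with hψ1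
    obtain ⟨n, ψ, hψinj, ⟨iso3⟩⟩ := IH r hrlt ψ1
    exact ⟨n, ψ, hψinj,
      ⟨((mappingTorus.rangeEquiv φ).trans (mappingTorus.congrEquiv φ' e)).trans iso3⟩⟩
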